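/- arXiv:1304.2003 — 2 statements merged into one kernel-verified Lean document; each statement's English description precedes it below -/
import Mathlib

section
/- Ahlfors' lemma for C² densities: Let λ : 𝔻 → (0,∞) be C² with Δ(log λ)(z) ≥ 4 λ(z)² for all z ∈ 𝔻, and suppose log λ is bounded above on 𝔻 near the boundary in the sense that limsup_{|z|→1} λ(z)(1−|z|²) ≤ 1. Then λ(z) ≤ 1/(1 − |z|²) for all z ∈ 𝔻. -/
open Set

/-- The Laplacian of `u : ℂ → ℝ` in the real coordinates. -/
noncomputable def laplacian (u : ℂ → ℝ) (z : ℂ) : ℝ :=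
  fderiv ℝ (fun w => fderiv ℝ u w 1) z 1 +
    fderiv ℝ (fun w => fderiv ℝ u w Complex.I) z Complex.I

open Filter Topology

/-- 1D second derivative test at a local max. -/
theorem second_deriv_test {g : ℝ → ℝ} {c : ℝ}
    (hmax : IsLocalMax g 0)
    (hd : ∀ᶠ t in 𝓝 (0:ℝ), DifferentiableAt ℝ g t)
    (hd2 : HasDerivAt (deriv g) c 0) : c ≤ 0 := by
  by_contra hc
  push_neg at hc
  have h0 : deriv g 0 = 0 := hmax.deriv_eq_zero
  have hslope : Tendsto (slope (deriv g) 0) (𝓝[≠] 0) (𝓝 c) :=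
    hasDerivAt_iff_tendsto_slope.mp hd2
  have hpos : ∀ᶠ t in 𝓝[>] (0:ℝ), 0 < deriv g t := by
    have : ∀ᶠ t in 𝓝[>] (0:ℝ), 0 < slope (deriv g) 0 t := by
      have := hslope.mono_left (nhdsWithin_mono _ (fun t ht => ht.ne' : Ioi (0:ℝ) ⊆ {0}ᶜ))
      exact this.eventually (eventually_gt_nhds hc)
    filter_upwards [this, self_mem_nhdsWithin] with t ht ht0
    have : slope (deriv g) 0 t = deriv g t / t := by
      simp [slope_def_field, h0]
    rw [this] at ht
    have := mul_pos ht (show (0:ℝ) < t from ht0)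
    rwa [div_mul_cancel₀] at this
    exact ne_of_gt ht0
  rcases (nhdsGT_basis (0:ℝ)).eventually_iff.mp hpos with ⟨δ₁, hδ₁, hIoo1⟩
  rcases Metric.eventually_nhds_iff.mp hd with ⟨δ₂, hδ₂, hIoo2⟩
  rcases Metric.eventually_nhds_iff.mp hmax with ⟨δ₃, hδ₃, hIoo3⟩
  set δ := min δ₁ (min δ₂ δ₃) / 2 with hδdef
  have hδpos : 0 < δ := by positivity
  have hδlt1 : δ < δ₁ := by
    have : δ ≤ δ₁ / 2 := by
      apply div_le_div_of_nonneg_right _ (by norm_num)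
      · exact min_le_left _ _
    linarith [half_lt_self hδ₁]
  have hδlt2 : δ < δ₂ := by
    have : δ ≤ δ₂ / 2 := by
      apply div_le_div_of_nonneg_right _ (by norm_num)
      · exact (min_le_right _ _).trans (min_le_left _ _)
    linarith [half_lt_self hδ₂]
  have hδlt3 : δ < δ₃ := by
    have : δ ≤ δ₃ / 2 := by
      apply div_le_div_of_nonneg_right _ (by norm_num)
      · exact (min_le_right _ _).trans (min_le_right _ _)
    linarith [half_lt_self hδ₃]
  have hmono : StrictMonoOn g (Icc 0 δ) := by
    apply strictMonoOn_of_deriv_pos (convex_Icc _ _)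
    · apply ContinuousOn.mono (s := Icc 0 δ) _ (le_refl _)
      intro t ht
      have : DifferentiableAt ℝ g t := by
        apply hIoo2
        have : |t| ≤ δ := by
          rw [abs_le]; constructor <;> [linarith [ht.1]; linarith [ht.2]]
        calc dist t 0 = |t| := by simp [Real.dist_eq]
          _ ≤ δ := this
          _ < δ₂ := hδlt2
      exact this.continuousAt.continuousWithinAt
    · intro t ht
      rw [interior_Icc] at ht
      exact hIoo1 ⟨ht.1, lt_trans ht.2 hδlt1⟩
  have h1 : g δ ≤ g 0 := by
    apply hIoo3
    simp [Real.dist_eq, abs_of_pos hδpos]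
    linarith
  have h2 : g 0 < g δ := hmono ⟨le_refl _, le_of_lt hδpos⟩ ⟨le_of_lt hδpos, le_refl _⟩ hδpos
  linarith

theorem secondDirDeriv_nonpos {u : ℂ → ℝ} {z₀ : ℂ} (hu : ContDiffAt ℝ 2 u z₀)
    (hmax : IsLocalMax u z₀) (v : ℂ) :
    fderiv ℝ (fun w => fderiv ℝ u w v) z₀ v ≤ 0 := by
  set line : ℝ → ℂ := fun t => z₀ + t • v with hline_def
  have hline : ∀ t : ℝ, HasDerivAt line v t := by
    intro t
    have : HasDerivAt (fun t : ℝ => t • v) ((1:ℝ) • v) t := (hasDerivAt_id t).smul_const v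
    rw [one_smul] at this
    exact this.const_add z₀
  have hline0 : line 0 = z₀ := by simp [hline_def]
  have hlinec : ContinuousAt line 0 := (hline 0).continuousAt
  set g : ℝ → ℝ := fun t => u (line t) with hg_def
  have hud : ∀ᶠ w in 𝓝 z₀, DifferentiableAt ℝ u w := by
    filter_upwards [hu.eventually (by norm_num)] with w hw
    exact hw.differentiableAt two_ne_zero
  have hud' : ∀ᶠ t in 𝓝 (0:ℝ), DifferentiableAt ℝ u (line t) := by
    have := hlinec.tendsto
    rw [hline0] at this
    exact this.eventually hud
  have hgd : ∀ᶠ t in 𝓝 (0:ℝ), DifferentiableAt ℝ g t := by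
    filter_upwards [hud'] with t ht
    exact ht.comp t (hline t).differentiableAt
  have hderiv : ∀ᶠ t in 𝓝 (0:ℝ), deriv g t = fderiv ℝ u (line t) v := by
    filter_upwards [hud'] with t ht
    exact (ht.hasFDerivAt.comp_hasDerivAt t (hline t)).deriv
  have hDvu : DifferentiableAt ℝ (fun w => fderiv ℝ u w v) z₀ := by
    have h1 : ContDiffAt ℝ 1 (fderiv ℝ u) z₀ := hu.fderiv_right (by norm_num)
    exact (h1.clm_apply contDiffAt_const).differentiableAt one_ne_zero
  have hφ : HasDerivAt (fun t => fderiv ℝ u (line t) v)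
      (fderiv ℝ (fun w => fderiv ℝ u w v) z₀ v) 0 := by
    have h' : HasFDerivAt (fun w => fderiv ℝ u w v)
        (fderiv ℝ (fun w => fderiv ℝ u w v) z₀) (line 0) := hline0.symm ▸ hDvu.hasFDerivAt
    exact h'.comp_hasDerivAt 0 (hline 0)
  have hd2 : HasDerivAt (deriv g) (fderiv ℝ (fun w => fderiv ℝ u w v) z₀ v) 0 :=
    hφ.congr_of_eventuallyEq hderiv
  have hmaxg : IsLocalMax g 0 := by
    have := hlinec.tendsto
    rw [hline0] at this
    have h := this.eventually hmax
    simpa [IsLocalMax, IsMaxFilter, hg_def, hline0] using h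
  exact second_deriv_test hmaxg hgd hd2

theorem laplacian_nonpos_of_isLocalMax {u : ℂ → ℝ} {z₀ : ℂ} (hu : ContDiffAt ℝ 2 u z₀)
    (hmax : IsLocalMax u z₀) : laplacian u z₀ ≤ 0 := by
  have h1 := secondDirDeriv_nonpos hu hmax 1
  have h2 := secondDirDeriv_nonpos hu hmax Complex.I
  unfold laplacian
  linarith

theorem dv_differentiableAt {f : ℂ → ℝ} {z : ℂ} (hf : ContDiffAt ℝ 2 f z) (v : ℂ) :
    DifferentiableAt ℝ (fun w => fderiv ℝ f w v) z :=
  ((hf.fderiv_right (m := 1) (by norm_num)).clm_apply contDiffAt_const).differentiableAt one_ne_zero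

theorem laplacian_add {f g : ℂ → ℝ} {z : ℂ} (hf : ContDiffAt ℝ 2 f z)
    (hg : ContDiffAt ℝ 2 g z) :
    laplacian (fun w => f w + g w) z = laplacian f z + laplacian g z := by
  have key : ∀ v : ℂ, fderiv ℝ (fun w => fderiv ℝ (fun w => f w + g w) w v) z v
      = fderiv ℝ (fun w => fderiv ℝ f w v) z v + fderiv ℝ (fun w => fderiv ℝ g w v) z v := by
    intro v
    have hev : (fun w => fderiv ℝ (fun w => f w + g w) w v)
        =ᶠ[𝓝 z] fun w => fderiv ℝ f w v + fderiv ℝ g w v := by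
      filter_upwards [hf.eventually (by norm_num), hg.eventually (by norm_num)] with w hfw hgw
      rw [fderiv_fun_add (hfw.differentiableAt two_ne_zero) (hgw.differentiableAt two_ne_zero)]
      rfl
    rw [hev.fderiv_eq, fderiv_fun_add (dv_differentiableAt hf v) (dv_differentiableAt hg v)]
    rfl
  unfold laplacian
  rw [key 1, key Complex.I]
  ring

section qcomp
open Complex

noncomputable def sfun : ℂ → ℝ := fun w => 1 - (w.re * w.re + w.im * w.im)

theorem hre' (w : ℂ) : HasFDerivAt (fun w : ℂ => w.re) Complex.reCLM w :=
  Complex.reCLM.hasFDerivAt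

theorem him' (w : ℂ) : HasFDerivAt (fun w : ℂ => w.im) Complex.imCLM w :=
  Complex.imCLM.hasFDerivAt

noncomputable def sderiv (w : ℂ) : ℂ →L[ℝ] ℝ :=
  -((w.re • Complex.reCLM + w.re • Complex.reCLM) + (w.im • Complex.imCLM + w.im • Complex.imCLM))

theorem sfun_hasFDerivAt (w : ℂ) : HasFDerivAt sfun (sderiv w) w := by
  have h1 := (hre' w).mul (hre' w)
  have h2 := (him' w).mul (him' w)
  exact (h1.add h2).const_sub 1

theorem sfun_contDiff : ContDiff ℝ ⊤ sfun := by
  have h1 : ContDiff ℝ ⊤ (fun w : ℂ => w.re) := Complex.reCLM.contDiff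
  have h2 : ContDiff ℝ ⊤ (fun w : ℂ => w.im) := Complex.imCLM.contDiff
  exact contDiff_const.sub ((h1.mul h1).add (h2.mul h2))

theorem q_contDiffAt {z : ℂ} (hz : sfun z ≠ 0) :
    ContDiffAt ℝ 2 (fun w => Real.log (sfun w)) z :=
  ((sfun_contDiff.of_le le_top).contDiffAt).log hz

theorem q_fderiv (w : ℂ) (hw : sfun w ≠ 0) :
    fderiv ℝ (fun w => Real.log (sfun w)) w = (sfun w)⁻¹ • sderiv w :=
  ((sfun_hasFDerivAt w).log hw).fderiv

theorem sderiv_one (w : ℂ) : sderiv w 1 = -(2 * w.re) := by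
  simp [sderiv]; ring

theorem sderiv_I (w : ℂ) : sderiv w Complex.I = -(2 * w.im) := by
  simp [sderiv]; ring

theorem q_laplacian {z : ℂ} (hz : z.re * z.re + z.im * z.im < 1) :
    laplacian (fun w => Real.log (sfun w)) z = -4 / (sfun z) ^ 2 := by
  have hU : IsOpen {w : ℂ | w.re * w.re + w.im * w.im < 1} := by
    have : Continuous (fun w : ℂ => w.re * w.re + w.im * w.im) := by continuity
    exact isOpen_lt this continuous_const
  have hmem : ∀ᶠ w in 𝓝 z, w.re * w.re + w.im * w.im < 1 :=
    hU.eventually_mem hz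
  have hspos : ∀ w : ℂ, w.re * w.re + w.im * w.im < 1 → 0 < sfun w := by
    intro w hw; simp only [sfun]; linarith
  have hsz : sfun z ≠ 0 := ne_of_gt (hspos z hz)
  -- directional derivative along 1
  have hev1 : (fun w => fderiv ℝ (fun w => Real.log (sfun w)) w 1)
      =ᶠ[𝓝 z] fun w => (sfun w)⁻¹ * (-(2 * w.re)) := by
    filter_upwards [hmem] with w hw
    rw [q_fderiv w (ne_of_gt (hspos w hw))]
    simp [sderiv_one]
  have hevI : (fun w => fderiv ℝ (fun w => Real.log (sfun w)) w Complex.I)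
      =ᶠ[𝓝 z] fun w => (sfun w)⁻¹ * (-(2 * w.im)) := by
    filter_upwards [hmem] with w hw
    rw [q_fderiv w (ne_of_gt (hspos w hw))]
    simp [sderiv_I]
  have hinv : HasFDerivAt (fun w => (sfun w)⁻¹) ((-((sfun z) ^ 2)⁻¹) • sderiv z) z :=
    (hasDerivAt_inv hsz).comp_hasFDerivAt z (sfun_hasFDerivAt z)
  have hnum1 : HasFDerivAt (fun w : ℂ => -(2 * w.re)) (-((2:ℝ) • Complex.reCLM)) z :=
    ((hre' z).const_mul 2).neg
  have hnumI : HasFDerivAt (fun w : ℂ => -(2 * w.im)) (-((2:ℝ) • Complex.imCLM)) z :=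
    ((him' z).const_mul 2).neg
  have hmul1 := hinv.fun_mul hnum1
  have hmulI := hinv.fun_mul hnumI
  have e1 : fderiv ℝ (fun w => fderiv ℝ (fun w => Real.log (sfun w)) w 1) z 1
      = (sfun z)⁻¹ * (-2) + (-(2 * z.re)) * (-((sfun z) ^ 2)⁻¹ * (-(2 * z.re))) := by
    rw [hev1.fderiv_eq, hmul1.fderiv]
    simp [sderiv_one]
  have eI : fderiv ℝ (fun w => fderiv ℝ (fun w => Real.log (sfun w)) w Complex.I) z Complex.I
      = (sfun z)⁻¹ * (-2) + (-(2 * z.im)) * (-((sfun z) ^ 2)⁻¹ * (-(2 * z.im))) := by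
    rw [hevI.fderiv_eq, hmulI.fderiv]
    simp [sderiv_I]
  unfold laplacian
  rw [e1, eI]
  have hs : sfun z = 1 - (z.re * z.re + z.im * z.im) := rfl
  have hsz' : 1 - (z.re * z.re + z.im * z.im) ≠ 0 := hs ▸ hsz
  rw [hs]
  field_simp
  ring

end qcomp

theorem sfun_eq (w : ℂ) : sfun w = 1 - ‖w‖ ^ 2 := by
  rw [Complex.sq_norm, Complex.normSq_apply]; rfl


/-- Ahlfors' lemma for `C²` densities: if `λ > 0` is `C²` on the unit disk with
`Δ(log λ) ≥ 4λ²` (curvature `≤ −4`), and `limsup_{|z|→1} λ(z)(1−|z|²) ≤ 1`, then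
`λ(z) ≤ 1/(1−|z|²)`, the hyperbolic density, throughout the disk. -/
theorem ahlfors_lemma (lam : ℂ → ℝ)
    (hpos : ∀ z ∈ Metric.ball (0:ℂ) 1, 0 < lam z)
    (hC2 : ContDiffOn ℝ 2 lam (Metric.ball (0:ℂ) 1))
    (hcurv : ∀ z ∈ Metric.ball (0:ℂ) 1,
      4 * lam z ^ 2 ≤ laplacian (fun w => Real.log (lam w)) z)
    (hlimsup : ∀ ε > (0:ℝ), ∃ r : ℝ, r < 1 ∧ ∀ z : ℂ,
      r < ‖z‖ → ‖z‖ < 1 → lam z * (1 - ‖z‖ ^ 2) ≤ 1 + ε) :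
    ∀ z ∈ Metric.ball (0:ℂ) 1, lam z ≤ 1 / (1 - ‖z‖ ^ 2) := by
  have hmemball : ∀ w : ℂ, w ∈ Metric.ball (0:ℂ) 1 ↔ ‖w‖ < 1 := by
    intro w; rw [Metric.mem_ball, dist_zero_right]
  have hsfun_pos : ∀ w : ℂ, ‖w‖ < 1 → 0 < sfun w := by
    intro w hw
    rw [sfun_eq]
    have h2 : ‖w‖ ^ 2 < 1 := by
      have := norm_nonneg w
      nlinarith
    linarith
  intro z hz
  have hz1 : ‖z‖ < 1 := (hmemball z).mp hz
  have hszpos : 0 < 1 - ‖z‖ ^ 2 := by rw [← sfun_eq]; exact hsfun_pos z hz1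
  rw [le_div_iff₀ hszpos]
  apply le_of_forall_pos_le_add
  intro ε hε
  obtain ⟨r, hr1, hrb⟩ := hlimsup ε hε
  set R : ℝ := max r 0 with hR_def
  have hR1 : R < 1 := max_lt hr1 one_pos
  have hR0 : 0 ≤ R := le_max_right r 0
  set R' : ℝ := (R + 1) / 2 with hR'_def
  have hRR' : R < R' := by rw [hR'_def]; linarith
  have hR'1 : R' < 1 := by rw [hR'_def]; linarith
  have hR'0 : 0 < R' := by rw [hR'_def]; linarith
  set u : ℂ → ℝ := fun w => Real.log (lam w) + Real.log (sfun w) with hu_def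
  have hexp : ∀ w ∈ Metric.ball (0:ℂ) 1, Real.exp (u w) = lam w * sfun w := by
    intro w hw
    rw [hu_def]
    rw [Real.exp_add, Real.exp_log (hpos w hw),
      Real.exp_log (hsfun_pos w ((hmemball w).mp hw))]
  set K : Set ℂ := Metric.closedBall (0:ℂ) R' with hK_def
  have hKsub : K ⊆ Metric.ball (0:ℂ) 1 := by
    intro w hw
    rw [hK_def, Metric.mem_closedBall] at hw
    rw [Metric.mem_ball]
    linarith
  have hcont : ContinuousOn u K := by
    apply ContinuousOn.add
    · exact ContinuousOn.log (hC2.continuousOn.mono hKsub)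
        (fun w hw => ne_of_gt (hpos w (hKsub hw)))
    · exact ContinuousOn.log (sfun_contDiff.continuous.continuousOn)
        (fun w hw => ne_of_gt (hsfun_pos w ((hmemball w).mp (hKsub hw))))
  obtain ⟨z₀, hz₀K, hz₀max⟩ := (isCompact_closedBall (0:ℂ) R').exists_isMaxOn
    ⟨0, by simp [hK_def, le_of_lt hR'0]⟩ hcont
  have hz₀abs : ‖z₀‖ ≤ R' := by
    rw [Metric.mem_closedBall, dist_zero_right] at hz₀K
    exact hz₀K
  have hz₀ball : z₀ ∈ Metric.ball (0:ℂ) 1 := hKsub hz₀K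
  have key : ∀ w ∈ Metric.ball (0:ℂ) 1, lam w * sfun w ≤ 1 + ε := by
    have hcase : u z₀ ≤ Real.log (1 + ε) := by
      by_contra hcase
      push_neg at hcase
      -- boundary bound forces interior max point
      have hbig : 1 + ε < lam z₀ * sfun z₀ := by
        rw [← hexp z₀ hz₀ball]
        calc 1 + ε = Real.exp (Real.log (1 + ε)) := (Real.exp_log (by linarith)).symm
          _ < Real.exp (u z₀) := Real.exp_lt_exp.mpr hcase
      have hz₀int : ‖z₀‖ < R' := by
        rcases lt_or_eq_of_le hz₀abs with h | h
        · exact h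
        · exfalso
          have h1 : r < ‖z₀‖ := by
            rw [h]; exact lt_of_le_of_lt (le_max_left r 0) hRR'
          have h2 := hrb z₀ h1 ((hmemball z₀).mp hz₀ball)
          rw [← sfun_eq] at h2
          linarith
      have hlocmax : IsLocalMax u z₀ := by
        apply hz₀max.isLocalMax
        exact Filter.mem_of_superset
          ((Metric.isOpen_ball).mem_nhds
            (by rw [Metric.mem_ball, dist_zero_right]; exact hz₀int))
          Metric.ball_subset_closedBall
      have hloglamC2 : ContDiffAt ℝ 2 (fun w => Real.log (lam w)) z₀ :=
        (hC2.contDiffAt ((Metric.isOpen_ball).mem_nhds hz₀ball)).log (ne_of_gt (hpos z₀ hz₀ball))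
      have hqC2 : ContDiffAt ℝ 2 (fun w => Real.log (sfun w)) z₀ :=
        q_contDiffAt (ne_of_gt (hsfun_pos z₀ ((hmemball z₀).mp hz₀ball)))
      have huC2 : ContDiffAt ℝ 2 u z₀ := hloglamC2.add hqC2
      have hlap_le : laplacian u z₀ ≤ 0 := laplacian_nonpos_of_isLocalMax huC2 hlocmax
      have hlap_eq : laplacian u z₀ =
          laplacian (fun w => Real.log (lam w)) z₀ +
            laplacian (fun w => Real.log (sfun w)) z₀ :=
        laplacian_add hloglamC2 hqC2
      have hnormSq : z₀.re * z₀.re + z₀.im * z₀.im < 1 := by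
        have := hsfun_pos z₀ ((hmemball z₀).mp hz₀ball)
        simp only [sfun] at this
        linarith
      have hqlap : laplacian (fun w => Real.log (sfun w)) z₀ = -4 / (sfun z₀) ^ 2 :=
        q_laplacian hnormSq
      have hA := hcurv z₀ hz₀ball
      have hs0 : 0 < sfun z₀ := hsfun_pos z₀ ((hmemball z₀).mp hz₀ball)
      have hinequality : 4 / (sfun z₀) ^ 2 < 4 * lam z₀ ^ 2 := by
        rw [div_lt_iff₀ (by positivity)]
        nlinarith [hbig, hs0, hpos z₀ hz₀ball, hε]
      rw [hlap_eq, hqlap] at hlap_le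
      have : (0:ℝ) < 4 * lam z₀ ^ 2 + -4 / (sfun z₀) ^ 2 := by
        have h4 : -4 / (sfun z₀) ^ 2 = -(4 / (sfun z₀) ^ 2) := by ring
        rw [h4]; linarith
      linarith
    intro w hw
    by_cases hwK : w ∈ K
    · have h1 : u w ≤ Real.log (1 + ε) := le_trans (hz₀max hwK) hcase
      rw [← hexp w hw]
      calc Real.exp (u w) ≤ Real.exp (Real.log (1 + ε)) := Real.exp_le_exp.mpr h1
        _ = 1 + ε := Real.exp_log (by linarith)
    · have hwabs : R' < ‖w‖ := by
        rw [hK_def, Metric.mem_closedBall, dist_zero_right] at hwK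
        push_neg at hwK
        exact hwK
      have h1 : r < ‖w‖ := lt_of_le_of_lt (le_max_left r 0) (lt_trans hRR' hwabs)
      have h2 := hrb w h1 ((hmemball w).mp hw)
      rw [← sfun_eq] at h2
      exact h2
  have := key z hz
  rw [sfun_eq] at this
  exact this
end

section
/- Maximum principle comparison: let G ⊆ ℂ be a bounded domain and u, v : G → ℝ continuous on the closure of G with u, v ∈ C²(G), Δu ≥ 4e^{2u} and Δv = 4e^{2v} on G, and u ≤ v on ∂G. Then u ≤ v throughout G. -/
open Set Filter

lemma second_dir_deriv_nonpos (f : ℂ → ℝ) (z₀ e : ℂ)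
    (hf : ∀ᶠ z in nhds z₀, DifferentiableAt ℝ f z)
    (hf' : DifferentiableAt ℝ (fun z => fderiv ℝ f z e) z₀)
    (hmax : IsLocalMax f z₀) :
    fderiv ℝ (fun z => fderiv ℝ f z e) z₀ e ≤ 0 := by
  set g : ℝ → ℝ := fun t => f (z₀ + t • e) with hg
  set g₁ : ℝ → ℝ := fun t => fderiv ℝ f (z₀ + t • e) e with hg₁def
  set B : ℝ := fderiv ℝ (fun z => fderiv ℝ f z e) z₀ e with hB
  have hφ : ∀ t : ℝ, HasDerivAt (fun s : ℝ => z₀ + s • e) e t := by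
    intro t
    simpa using ((hasDerivAt_id t).smul_const e).const_add z₀
  have hφt : Tendsto (fun t : ℝ => z₀ + t • e) (nhds 0) (nhds z₀) := by
    have hc : Continuous (fun t : ℝ => z₀ + t • e) := by continuity
    exact hc.tendsto' 0 z₀ (by simp)
  have hgd : ∀ᶠ t in nhds (0:ℝ), HasDerivAt g (g₁ t) t := by
    filter_upwards [hφt.eventually hf] with t ht
    exact ht.hasFDerivAt.comp_hasDerivAt t (hφ t)
  have hg₁d : HasDerivAt g₁ B 0 := by
    have hf'' : HasFDerivAt (fun z => fderiv ℝ f z e)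
        (fderiv ℝ (fun z => fderiv ℝ f z e) z₀) (z₀ + (0:ℝ) • e) := by
      simpa using hf'.hasFDerivAt
    exact hf''.comp_hasDerivAt (0:ℝ) (hφ 0)
  have hmax0 : ∀ᶠ t in nhds (0:ℝ), g t ≤ g 0 := by
    filter_upwards [hφt.eventually hmax] with t ht
    simpa [hg] using ht
  have hg₁0 : g₁ 0 = 0 := by
    have h0 : HasDerivAt g (g₁ 0) 0 := hgd.self_of_nhds
    have hm : IsLocalMax g 0 := hmax0
    exact hm.hasDerivAt_eq_zero h0
  obtain ⟨ε, hε, hεp⟩ : ∃ ε > 0, ∀ t : ℝ, |t| < ε → HasDerivAt g (g₁ t) t ∧ g t ≤ g 0 := by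
    rcases Metric.eventually_nhds_iff.mp (hgd.and hmax0) with ⟨ε, hε, h⟩
    exact ⟨ε, hε, fun t ht => h (by simpa [Real.dist_eq] using ht)⟩
  have key : ∀ n : ℕ, ∃ c : ℝ, 0 < c ∧ c < ε * (1 / (n + 1)) ∧ g₁ c ≤ 0 := by
    intro n
    set t : ℝ := ε / (2 * (n + 1)) with ht
    have ht0 : 0 < t := by positivity
    have htε : t < ε := by
      rw [ht, div_lt_iff₀ (by positivity)]
      nlinarith [hε]
    have habs : ∀ x ∈ Icc (0:ℝ) t, |x| < ε := by
      intro x hx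
      rw [abs_of_nonneg hx.1]
      exact lt_of_le_of_lt hx.2 htε
    have hcont : ContinuousOn g (Icc 0 t) := fun x hx =>
      ((hεp x (habs x hx)).1.continuousAt).continuousWithinAt
    have hderiv : ∀ x ∈ Ioo (0:ℝ) t, HasDerivAt g (g₁ x) x := fun x hx =>
      (hεp x (habs x ⟨hx.1.le, hx.2.le⟩)).1
    obtain ⟨c, hc, hc'⟩ := exists_hasDerivAt_eq_slope g g₁ ht0 hcont hderiv
    refine ⟨c, hc.1, ?_, ?_⟩
    · calc c < t := hc.2
        _ < ε * (1 / (n + 1)) := by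
          rw [ht, mul_one_div]
          exact div_lt_div_of_pos_left hε (by positivity) (by nlinarith [Nat.cast_nonneg (α := ℝ) n])
    · rw [hc']
      apply div_nonpos_of_nonpos_of_nonneg
      · have := (hεp t (by rw [abs_of_nonneg ht0.le]; exact htε)).2
        linarith
      · linarith
  choose c hc0 hclt hcneg using key
  have hlim : Tendsto (fun n : ℕ => ε * (1 / (n + 1))) atTop (nhds 0) := by
    simpa using tendsto_one_div_add_atTop_nhds_zero_nat.const_mul ε
  have hc_tendsto : Tendsto c atTop (nhds 0) :=
    squeeze_zero (fun n => (hc0 n).le) (fun n => (hclt n).le) hlim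
  have h1 : Tendsto c atTop (nhdsWithin 0 {(0:ℝ)}ᶜ) :=
    tendsto_nhdsWithin_of_tendsto_nhds_of_eventually_within _ hc_tendsto
      (Eventually.of_forall fun n => (hc0 n).ne')
  have hslope : Tendsto (fun n => g₁ (c n) / c n) atTop (nhds B) := by
    have h2 := (hasDerivAt_iff_tendsto_slope.mp hg₁d).comp h1
    have : (slope g₁ 0) ∘ c = fun n => g₁ (c n) / c n := by
      funext n
      simp [slope_def_field, hg₁0]
    rwa [this] at h2
  exact le_of_tendsto hslope (Eventually.of_forall fun n =>
    div_nonpos_of_nonpos_of_nonneg (hcneg n) (hc0 n).le)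

/-- Maximum principle comparison: on a bounded domain `G`, if `u, v` are continuous on
`closure G`, `C²` on `G`, with `Δu ≥ 4e^{2u}` and `Δv = 4e^{2v}` on `G`, and `u ≤ v` on
`∂G`, then `u ≤ v` throughout `G`. -/
theorem maximum_principle_comparison
    (G : Set ℂ) (hG : IsOpen G) (hGb : Bornology.IsBounded G)
    (u v : ℂ → ℝ)
    (hu : ContinuousOn u (closure G)) (hv : ContinuousOn v (closure G))
    (hu2 : ContDiffOn ℝ 2 u G) (hv2 : ContDiffOn ℝ 2 v G)
    (hΔu : ∀ z ∈ G, 4 * Real.exp (2 * u z) ≤ laplacian u z)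
    (hΔv : ∀ z ∈ G, laplacian v z = 4 * Real.exp (2 * v z))
    (hbd : ∀ z ∈ frontier G, u z ≤ v z) :
    ∀ z ∈ G, u z ≤ v z := by
  intro z hz
  by_contra hcon
  push_neg at hcon
  set w : ℂ → ℝ := fun x => u x - v x with hw
  -- w attains a max on the compact closure
  have hcomp : IsCompact (closure G) :=
    Metric.isCompact_of_isClosed_isBounded isClosed_closure hGb.closure
  have hwc : ContinuousOn w (closure G) := hu.sub hv
  obtain ⟨z₀, hz₀c, hz₀max⟩ := hcomp.exists_isMaxOn ⟨z, subset_closure hz⟩ hwc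
  have hwz : 0 < w z := by simp [hw]; linarith
  have hwz₀ : 0 < w z₀ := lt_of_lt_of_le hwz (hz₀max (subset_closure hz))
  -- z₀ is in G, not on the frontier
  have hz₀G : z₀ ∈ G := by
    by_contra h
    have hfr : z₀ ∈ frontier G := by
      rw [hG.frontier_eq]
      exact ⟨hz₀c, h⟩
    have := hbd z₀ hfr
    have : w z₀ ≤ 0 := by simp [hw]; linarith
    linarith
  -- differentiability facts at z₀
  have hGn : G ∈ nhds z₀ := hG.mem_nhds hz₀G
  have hud : ∀ x ∈ G, DifferentiableAt ℝ u x := fun x hx =>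
    (hu2.contDiffAt (hG.mem_nhds hx)).differentiableAt two_ne_zero
  have hvd : ∀ x ∈ G, DifferentiableAt ℝ v x := fun x hx =>
    (hv2.contDiffAt (hG.mem_nhds hx)).differentiableAt two_ne_zero
  have heval : ∀ (f : ℂ → ℝ), ContDiffOn ℝ 2 f G → ∀ e : ℂ,
      DifferentiableAt ℝ (fun x => fderiv ℝ f x e) z₀ := by
    intro f hf e
    have h1 : ContDiffAt ℝ 2 f z₀ := hf.contDiffAt hGn
    have h2 : ContDiffAt ℝ 1 (fderiv ℝ f) z₀ := h1.fderiv_right (by norm_num)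
    exact (h2.differentiableAt one_ne_zero).clm_apply (differentiableAt_const e)
  -- local max
  have hlmax : IsLocalMax w z₀ := by
    filter_upwards [hGn] with x hx
    exact hz₀max (subset_closure hx)
  -- the first-derivative evaluation of w agrees with the difference near z₀
  have hfd_eq : ∀ e : ℂ, (fun x => fderiv ℝ w x e)
      =ᶠ[nhds z₀] (fun x => fderiv ℝ u x e - fderiv ℝ v x e) := by
    intro e
    filter_upwards [hGn] with x hx
    rw [hw]
    rw [fderiv_fun_sub (hud x hx) (hvd x hx)]
    simp
  -- second derivative of w splits
  have hA : ∀ e : ℂ, fderiv ℝ (fun x => fderiv ℝ w x e) z₀ e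
      = fderiv ℝ (fun x => fderiv ℝ u x e) z₀ e - fderiv ℝ (fun x => fderiv ℝ v x e) z₀ e := by
    intro e
    rw [(hfd_eq e).fderiv_eq, fderiv_fun_sub (heval u hu2 e) (heval v hv2 e)]
    simp
  -- apply the second-derivative test in both directions
  have hdir : ∀ e : ℂ, fderiv ℝ (fun x => fderiv ℝ w x e) z₀ e ≤ 0 := by
    intro e
    apply second_dir_deriv_nonpos w z₀ e ?_ ?_ hlmax
    · filter_upwards [hGn] with x hx
      exact (hud x hx).sub (hvd x hx)
    · rw [(hfd_eq e).differentiableAt_iff]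
      exact (heval u hu2 e).sub (heval v hv2 e)
  have hlap : laplacian u z₀ - laplacian v z₀ ≤ 0 := by
    have h1 := hdir 1
    have h2 := hdir Complex.I
    rw [hA 1] at h1
    rw [hA Complex.I] at h2
    simp only [laplacian]
    linarith
  -- but the PDE inequalities force it to be positive
  have huv : v z₀ < u z₀ := by
    have := hwz₀
    simp [hw] at this
    linarith
  have hexp : Real.exp (2 * v z₀) < Real.exp (2 * u z₀) := by
    apply Real.exp_lt_exp.mpr
    linarith
  have := hΔu z₀ hz₀G
  rw [hΔv z₀ hz₀G] at hlap
  nlinarith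
end
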